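/- arXiv:2005.11836 — 2 statements merged into one kernel-verified Lean document; each statement's English description precedes it below -/
import Mathlib

section
/- Let L > 0, T > 0 and let w : ℝ² → ℝ be infinitely differentiable on an open neighborhood of [0,L]×[0,T], satisfying w(0,t) = w_x(0,t) = 0 for all t ∈ [0,T]. With u(x,t) = −(1/2)∫₀ˣ w_x(ξ,t)² dξ (so u_t(x,t) = −∫₀ˣ w_x w_xt dξ and u_tt(x,t) = −∫₀ˣ [w_xt² + w_x w_xtt] dξ), one has for every t ∈ [0,T]: ∫₀ᴸ ∂_x[ w_x(x,t) ∫ₓᴸ u_tt(ξ,t) dξ ] · w_t(x,t) dx = (1/2) (d/dt) ∫₀ᴸ u_t(x,t)² dx. -/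
open MeasureTheory Set

/-- Spatial partial derivative of a function of `(x, t)`. -/
noncomputable def pdx (f : ℝ → ℝ → ℝ) : ℝ → ℝ → ℝ := fun x t => deriv (fun y => f y t) x

/-- Temporal partial derivative of a function of `(x, t)`. -/
noncomputable def pdt (f : ℝ → ℝ → ℝ) : ℝ → ℝ → ℝ := fun x t => deriv (fun s => f x s) t

/-- `u_t(x,t) = -∫₀ˣ w_x w_xt dξ`. -/
noncomputable def utF (w : ℝ → ℝ → ℝ) : ℝ → ℝ → ℝ := fun x t =>
  -∫ ξ in (0:ℝ)..x, pdx w ξ t * pdt (pdx w) ξ t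

/-- `u_tt(x,t) = -∫₀ˣ [w_xt² + w_x w_xtt] dξ`. -/
noncomputable def uttF (w : ℝ → ℝ → ℝ) : ℝ → ℝ → ℝ := fun x t =>
  -∫ ξ in (0:ℝ)..x, ((pdt (pdx w) ξ t) ^ 2 + pdx w ξ t * pdt (pdt (pdx w)) ξ t)

noncomputable def W2 (w : ℝ → ℝ → ℝ) : ℝ × ℝ → ℝ := fun q => w q.1 q.2
noncomputable def dX (f : ℝ × ℝ → ℝ) : ℝ × ℝ → ℝ := fun q => fderiv ℝ f q (1, 0)
noncomputable def dT (f : ℝ × ℝ → ℝ) : ℝ × ℝ → ℝ := fun q => fderiv ℝ f q (0, 1)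

lemma sliceX {f : ℝ × ℝ → ℝ} {f' : (ℝ × ℝ) →L[ℝ] ℝ} {x s : ℝ}
    (h : HasFDerivAt f f' (x, s)) : HasDerivAt (fun y => f (y, s)) (f' (1, 0)) x := by
  exact h.comp_hasDerivAt x ((hasDerivAt_id x).prodMk (hasDerivAt_const x s))

lemma sliceT {f : ℝ × ℝ → ℝ} {f' : (ℝ × ℝ) →L[ℝ] ℝ} {x s : ℝ}
    (h : HasFDerivAt f f' (x, s)) : HasDerivAt (fun r => f (x, r)) (f' (0, 1)) s := by
  exact h.comp_hasDerivAt s ((hasDerivAt_const s x).prodMk (hasDerivAt_id s))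

lemma abs_sub_clamp_le {x lo hi ε : ℝ} (hε : 0 ≤ ε) (hlohi : lo ≤ hi)
    (h1 : lo - ε ≤ x) (h2 : x ≤ hi + ε) : |x - min (max x lo) hi| ≤ ε := by
  rcases le_total x lo with h | h
  · rw [max_eq_right h, min_eq_left hlohi, abs_of_nonpos (by linarith)]; linarith
  · rw [max_eq_left h]
    rcases le_total x hi with h3 | h3
    · rw [min_eq_left h3]; simpa using hε
    · rw [min_eq_right h3, abs_of_nonneg (by linarith)]; linarith

lemma dStep {U : Set (ℝ × ℝ)} (hUo : IsOpen U) {f : ℝ × ℝ → ℝ}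
    (hf : ContDiffOn ℝ (⊤ : ℕ∞) f U) :
    ContDiffOn ℝ (⊤ : ℕ∞) (dX f) U ∧ ContDiffOn ℝ (⊤ : ℕ∞) (dT f) U ∧
      ∀ q ∈ U, HasFDerivAt f (fderiv ℝ f q) q := by
  have h' : ContDiffOn ℝ (⊤ : ℕ∞) (fderiv ℝ f) U := hf.fderiv_of_isOpen hUo le_rfl
  refine ⟨h'.clm_apply contDiffOn_const, h'.clm_apply contDiffOn_const, fun q hq => ?_⟩
  exact ((hf.contDiffAt (hUo.mem_nhds hq)).differentiableAt (by simp)).hasFDerivAt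

/-- Pairing the nonlinear inertial term `∂ₓ(w_x ∫ₓᴸ u_tt dξ)` against the velocity
multiplier `w_t` yields the conserved quantity `(1/2)(d/dt)‖u_t‖²`. -/
theorem inertia_velocity_multiplier
    (L T : ℝ) (hL : 0 < L) (hT : 0 < T) (w : ℝ → ℝ → ℝ)
    (U : Set (ℝ × ℝ)) (hUo : IsOpen U) (hUs : Icc (0:ℝ) L ×ˢ Icc (0:ℝ) T ⊆ U)
    (hw : ContDiffOn ℝ (⊤ : ℕ∞) (fun q : ℝ × ℝ => w q.1 q.2) U)
    (hbc : ∀ t ∈ Icc (0:ℝ) T, w 0 t = 0 ∧ pdx w 0 t = 0) :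
    ∀ t ∈ Icc (0:ℝ) T,
      (∫ x in (0:ℝ)..L,
          pdx (fun y s => pdx w y s * ∫ ξ in y..L, uttF w ξ s) x t * pdt w x t)
        = (1/2) * deriv (fun s => ∫ x in (0:ℝ)..L, (utF w x s) ^ 2) t := by
  intro t ht
  have hwW : ContDiffOn ℝ (⊤ : ℕ∞) (W2 w) U := hw
  obtain ⟨hWx, hWt, hWd⟩ := dStep hUo hwW
  obtain ⟨hWxx, hWxt, hWxd⟩ := dStep hUo hWx
  obtain ⟨hWtx, hWtt, hWtd⟩ := dStep hUo hWt
  obtain ⟨hWxtx, hWxtt, hWxtd⟩ := dStep hUo hWxt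
  -- identification of pdx/pdt with joint partials on U
  have hpdx : ∀ x s : ℝ, (x, s) ∈ U → pdx w x s = dX (W2 w) (x, s) := by
    intro x s hq
    exact (sliceX (hWd _ hq)).deriv
  have hpdt : ∀ x s : ℝ, (x, s) ∈ U → pdt w x s = dT (W2 w) (x, s) := by
    intro x s hq
    exact (sliceT (hWd _ hq)).deriv
  have hnbt : ∀ x s : ℝ, (x, s) ∈ U → {r : ℝ | (x, r) ∈ U} ∈ nhds s := by
    intro x s hq
    exact (hUo.preimage (Continuous.prodMk_right x)).mem_nhds hq
  have hpdxt : ∀ x s : ℝ, (x, s) ∈ U → pdt (pdx w) x s = dT (dX (W2 w)) (x, s) := by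
    intro x s hq
    have h1 : HasDerivAt (fun r => dX (W2 w) (x, r)) (dT (dX (W2 w)) (x, s)) s :=
      sliceT (hWxd _ hq)
    have h2 : (fun r => pdx w x r) =ᶠ[nhds s] (fun r => dX (W2 w) (x, r)) := by
      filter_upwards [hnbt x s hq] with r hr using hpdx x r hr
    exact ((h1.congr_of_eventuallyEq h2)).deriv
  have hpdtt : ∀ x s : ℝ, (x, s) ∈ U →
      pdt (pdt (pdx w)) x s = dT (dT (dX (W2 w))) (x, s) := by
    intro x s hq
    have h1 : HasDerivAt (fun r => dT (dX (W2 w)) (x, r)) (dT (dT (dX (W2 w))) (x, s)) s :=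
      sliceT (hWxtd _ hq)
    have h2 : (fun r => pdt (pdx w) x r) =ᶠ[nhds s] (fun r => dT (dX (W2 w)) (x, r)) := by
      filter_upwards [hnbt x s hq] with r hr using hpdxt x r hr
    exact ((h1.congr_of_eventuallyEq h2)).deriv
  -- mixed partials symmetry : x-derivative of W_t equals W_xt
  have hmix : ∀ q ∈ U, fderiv ℝ (dT (W2 w)) q (1, 0) = dT (dX (W2 w)) q := by
    intro q hq
    have hF' : ContDiffOn ℝ (⊤ : ℕ∞) (fderiv ℝ (W2 w)) U := hwW.fderiv_of_isOpen hUo le_rfl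
    have hd2 : HasFDerivAt (fderiv ℝ (W2 w)) (fderiv ℝ (fderiv ℝ (W2 w)) q) q :=
      ((hF'.contDiffAt (hUo.mem_nhds hq)).differentiableAt
        (by simp)).hasFDerivAt
    have hsym := second_derivative_symmetric_of_eventually
      (f := W2 w) (f' := fderiv ℝ (W2 w)) (f'' := fderiv ℝ (fderiv ℝ (W2 w)) q)
      (by filter_upwards [hUo.mem_nhds hq] with p hp using hWd p hp) hd2
    have hflip : ∀ v : ℝ × ℝ, fderiv ℝ (fun p => fderiv ℝ (W2 w) p v) q
        = (fderiv ℝ (fderiv ℝ (W2 w)) q).flip v := by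
      intro v
      rw [fderiv_clm_apply hd2.differentiableAt (differentiableAt_const v)]
      simp [fderiv_const]
    calc fderiv ℝ (dT (W2 w)) q (1, 0)
        = (fderiv ℝ (fderiv ℝ (W2 w)) q).flip (0, 1) (1, 0) := by
          rw [show dT (W2 w) = fun p => fderiv ℝ (W2 w) p (0, 1) from rfl, hflip]
      _ = fderiv ℝ (fderiv ℝ (W2 w)) q (1, 0) (0, 1) := by
          rw [ContinuousLinearMap.flip_apply]
      _ = fderiv ℝ (fderiv ℝ (W2 w)) q (0, 1) (1, 0) := hsym _ _
      _ = (fderiv ℝ (fderiv ℝ (W2 w)) q).flip (1, 0) (0, 1) := by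
          rw [ContinuousLinearMap.flip_apply]
      _ = fderiv ℝ (fun p => fderiv ℝ (W2 w) p (1, 0)) q (0, 1) := by rw [hflip]
      _ = dT (dX (W2 w)) q := rfl
  -- rectangle around the physical domain inside U
  obtain ⟨δ, hδ0, hδs⟩ :=
    (isCompact_Icc.prod isCompact_Icc).exists_thickening_subset_open hUo hUs
  set ε := δ / 2 with hεdef
  have hε0 : 0 < ε := by positivity
  have hRU : Icc (-ε) (L + ε) ×ˢ Icc (-ε) (T + ε) ⊆ U := by
    rintro ⟨x, s⟩ ⟨hx, hs⟩
    apply hδs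
    rw [Metric.mem_thickening_iff]
    refine ⟨(min (max x 0) L, min (max s 0) T),
      ⟨⟨le_min (le_max_right _ _) hL.le, min_le_right _ _⟩,
       ⟨le_min (le_max_right _ _) hT.le, min_le_right _ _⟩⟩, ?_⟩
    rw [Prod.dist_eq]
    have h1 : dist x (min (max x 0) L) ≤ ε := by
      rw [Real.dist_eq]
      exact abs_sub_clamp_le hε0.le hL.le (by linarith [hx.1]) (by linarith [hx.2])
    have h2 : dist s (min (max s 0) T) ≤ ε := by
      rw [Real.dist_eq]
      exact abs_sub_clamp_le hε0.le hT.le (by linarith [hs.1]) (by linarith [hs.2])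
    have hεδ : ε < δ := by rw [hεdef]; linarith
    exact max_lt (lt_of_le_of_lt h1 hεδ) (lt_of_le_of_lt h2 hεδ)
  have hmemU : ∀ {x s : ℝ}, x ∈ Icc (-ε) (L + ε) → s ∈ Icc (-ε) (T + ε) →
      ((x, s) : ℝ × ℝ) ∈ U := fun hx hs => hRU ⟨hx, hs⟩
  have h0X : (0:ℝ) ∈ Icc (-ε) (L + ε) := ⟨by linarith, by linarith⟩
  have hLX : L ∈ Icc (-ε) (L + ε) := ⟨by linarith, by linarith⟩
  have htT : t ∈ Icc (-ε) (T + ε) := ⟨by linarith [ht.1], by linarith [ht.2]⟩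
  have htT' : t ∈ Ioo (-ε) (T + ε) := ⟨by linarith [ht.1], by linarith [ht.2]⟩
  have hsubX : Icc (0:ℝ) L ⊆ Icc (-ε) (L + ε) :=
    Icc_subset_Icc (by linarith) (by linarith)
  -- coefficient functions
  set g1 : ℝ × ℝ → ℝ := fun q => dX (W2 w) q * dT (dX (W2 w)) q with hg1def
  set g2 : ℝ × ℝ → ℝ :=
    fun q => (dT (dX (W2 w)) q) ^ 2 + dX (W2 w) q * dT (dT (dX (W2 w))) q with hg2def
  have hg1c : ContinuousOn g1 U := hWx.continuousOn.mul hWxt.continuousOn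
  have hg2c : ContinuousOn g2 U :=
    (hWxt.continuousOn.pow 2).add (hWx.continuousOn.mul hWxtt.continuousOn)
  have hRcp : IsCompact (Icc (-ε) (L + ε) ×ˢ Icc (-ε) (T + ε)) :=
    isCompact_Icc.prod isCompact_Icc
  obtain ⟨M2, hM2⟩ := hRcp.exists_bound_of_continuousOn (hg2c.mono hRU)
  set ut' : ℝ → ℝ → ℝ := fun x s => -∫ ξ in (0:ℝ)..x, g1 (ξ, s) with hut'def
  set utt' : ℝ → ℝ → ℝ := fun x s => -∫ ξ in (0:ℝ)..x, g2 (ξ, s) with hutt'def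
  -- identification with utF/uttF on the rectangle
  have hutF : ∀ x ∈ Icc (-ε) (L + ε), ∀ s ∈ Icc (-ε) (T + ε), utF w x s = ut' x s := by
    intro x hx s hs
    have heq : EqOn (fun ξ => pdx w ξ s * pdt (pdx w) ξ s) (fun ξ => g1 (ξ, s)) (uIcc 0 x) := by
      intro ξ hξ
      have hq := hmemU (uIcc_subset_Icc h0X hx hξ) hs
      simp only [hg1def]
      rw [hpdx _ _ hq, hpdxt _ _ hq]
    exact congrArg Neg.neg (intervalIntegral.integral_congr heq)
  have huttF : ∀ x ∈ Icc (-ε) (L + ε), ∀ s ∈ Icc (-ε) (T + ε), uttF w x s = utt' x s := by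
    intro x hx s hs
    have heq : EqOn (fun ξ => (pdt (pdx w) ξ s) ^ 2 + pdx w ξ s * pdt (pdt (pdx w)) ξ s)
        (fun ξ => g2 (ξ, s)) (uIcc 0 x) := by
      intro ξ hξ
      have hq := hmemU (uIcc_subset_Icc h0X hx hξ) hs
      simp only [hg2def]
      rw [hpdx _ _ hq, hpdxt _ _ hq, hpdtt _ _ hq]
    exact congrArg Neg.neg (intervalIntegral.integral_congr heq)
  -- continuity of slices
  have hg1sl : ∀ s ∈ Icc (-ε) (T + ε),
      ContinuousOn (fun ξ => g1 (ξ, s)) (Icc (-ε) (L + ε)) := fun s hs =>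
    (hg1c.mono hRU).comp (continuous_id.prodMk continuous_const).continuousOn
      (fun ξ hξ => ⟨hξ, hs⟩)
  have hg2sl : ∀ s ∈ Icc (-ε) (T + ε),
      ContinuousOn (fun ξ => g2 (ξ, s)) (Icc (-ε) (L + ε)) := fun s hs =>
    (hg2c.mono hRU).comp (continuous_id.prodMk continuous_const).continuousOn
      (fun ξ hξ => ⟨hξ, hs⟩)
  have hg1m : ∀ (s x : ℝ), (x, s) ∈ U → StronglyMeasurableAtFilter (fun ξ => g1 (ξ, s)) (nhds x) := by
    intro s x hq
    refine ContinuousOn.stronglyMeasurableAtFilter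
      (hUo.preimage (continuous_id.prodMk continuous_const))
      (hg1c.comp (continuous_id.prodMk continuous_const).continuousOn (fun ξ hξ => hξ)) x hq
  have hg2m : ∀ (s x : ℝ), (x, s) ∈ U → StronglyMeasurableAtFilter (fun ξ => g2 (ξ, s)) (nhds x) := by
    intro s x hq
    refine ContinuousOn.stronglyMeasurableAtFilter
      (hUo.preimage (continuous_id.prodMk continuous_const))
      (hg2c.comp (continuous_id.prodMk continuous_const).continuousOn (fun ξ hξ => hξ)) x hq
  -- FTC in space
  have hDut : ∀ s ∈ Icc (-ε) (T + ε), ∀ x ∈ Icc (-ε) (L + ε),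
      HasDerivAt (fun y => ut' y s) (-(g1 (x, s))) x := by
    intro s hs x hx
    have hint : IntervalIntegrable (fun ξ => g1 (ξ, s)) volume 0 x :=
      ((hg1sl s hs).mono (uIcc_subset_Icc h0X hx)).intervalIntegrable
    have hcont : ContinuousAt (fun ξ => g1 (ξ, s)) x :=
      ContinuousAt.comp (f := fun ξ : ℝ => (ξ, s)) (hg1c.continuousAt (hUo.mem_nhds (hmemU hx hs)))
        ((continuous_id.prodMk continuous_const).continuousAt)
    exact (intervalIntegral.integral_hasDerivAt_right hint (hg1m s x (hmemU hx hs)) hcont).neg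
  have hDutt : ∀ s ∈ Icc (-ε) (T + ε), ∀ x ∈ Icc (-ε) (L + ε),
      HasDerivAt (fun y => utt' y s) (-(g2 (x, s))) x := by
    intro s hs x hx
    have hint : IntervalIntegrable (fun ξ => g2 (ξ, s)) volume 0 x :=
      ((hg2sl s hs).mono (uIcc_subset_Icc h0X hx)).intervalIntegrable
    have hcont : ContinuousAt (fun ξ => g2 (ξ, s)) x :=
      ContinuousAt.comp (f := fun ξ : ℝ => (ξ, s)) (hg2c.continuousAt (hUo.mem_nhds (hmemU hx hs)))
        ((continuous_id.prodMk continuous_const).continuousAt)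
    exact (intervalIntegral.integral_hasDerivAt_right hint (hg2m s x (hmemU hx hs)) hcont).neg
  -- time derivative of ut' is utt'
  have hDt : ∀ x ∈ Icc (-ε) (L + ε), ∀ s ∈ Ioo (-ε) (T + ε),
      HasDerivAt (fun r => ut' x r) (utt' x s) s := by
    intro x hx s hs
    have hsubΙ : uIoc (0:ℝ) x ⊆ Icc (-ε) (L + ε) :=
      Ioc_subset_Icc_self.trans (uIcc_subset_Icc h0X hx)
    set ε₁ := min (s + ε) (T + ε - s) with hε₁def
    have hε₁0 : 0 < ε₁ := lt_min (by linarith [hs.1]) (by linarith [hs.2])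
    have hball : ∀ r ∈ Metric.ball s ε₁, r ∈ Icc (-ε) (T + ε) := by
      intro r hr
      rw [Metric.mem_ball, Real.dist_eq] at hr
      have h1 := abs_lt.1 hr
      have h2 := min_le_left (s + ε) (T + ε - s)
      have h3 := min_le_right (s + ε) (T + ε - s)
      constructor <;> [linarith; linarith]
    have key := intervalIntegral.hasDerivAt_integral_of_dominated_loc_of_deriv_le
      (F := fun r ξ => g1 (ξ, r)) (F' := fun r ξ => g2 (ξ, r)) (x₀ := s)
      (a := 0) (b := x) (bound := fun _ => max M2 0) (μ := volume) (Metric.ball_mem_nhds s hε₁0)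
      ?_ ?_ ?_ ?_ ?_ ?_
    · exact key.2.neg
    · filter_upwards [Ioo_mem_nhds hs.1 hs.2] with r hr
      exact (((hg1sl r (Ioo_subset_Icc_self hr)).mono hsubΙ).aestronglyMeasurable
        measurableSet_uIoc)
    · exact ((hg1sl s (Ioo_subset_Icc_self hs)).mono (uIcc_subset_Icc h0X hx)).intervalIntegrable
    · exact (((hg2sl s (Ioo_subset_Icc_self hs)).mono hsubΙ).aestronglyMeasurable
        measurableSet_uIoc)
    · refine Filter.Eventually.of_forall (fun ξ hξ r hr => ?_)
      exact le_trans (hM2 (ξ, r) ⟨hsubΙ hξ, hball r hr⟩) (le_max_left _ _)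
    · exact intervalIntegrable_const
    · refine Filter.Eventually.of_forall (fun ξ hξ r hr => ?_)
      have hq : ((ξ, r) : ℝ × ℝ) ∈ U := hmemU (hsubΙ hξ) (hball r hr)
      have h1 : HasDerivAt (fun r => dX (W2 w) (ξ, r)) (dT (dX (W2 w)) (ξ, r)) r :=
        sliceT (hWxd _ hq)
      have h2 : HasDerivAt (fun r => dT (dX (W2 w)) (ξ, r)) (dT (dT (dX (W2 w))) (ξ, r)) r :=
        sliceT (hWxtd _ hq)
      have h3 : HasDerivAt (fun r => dX (W2 w) (ξ, r) * dT (dX (W2 w)) (ξ, r)) _ r := h1.mul h2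
      simp only [hg1def, hg2def]
      exact h3.congr_deriv (by ring)
  -- bounds for ut', utt'
  obtain ⟨M1, hM1⟩ := hRcp.exists_bound_of_continuousOn (hg1c.mono hRU)
  set B := max ε (L + ε) with hBdef
  have hB0 : 0 < B := lt_of_lt_of_le hε0 (le_max_left _ _)
  have hxabs : ∀ x ∈ Icc (-ε) (L + ε), |x| ≤ B := by
    intro x hx
    rw [abs_le]
    constructor
    · linarith [hx.1, le_max_left ε (L + ε)]
    · linarith [hx.2, le_max_right ε (L + ε)]
  have hutb : ∀ x ∈ Icc (-ε) (L + ε), ∀ s ∈ Icc (-ε) (T + ε),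
      |ut' x s| ≤ max M1 0 * B := by
    intro x hx s hs
    have h1 : ∀ ξ ∈ uIoc (0:ℝ) x, ‖g1 (ξ, s)‖ ≤ max M1 0 := fun ξ hξ =>
      le_trans (hM1 (ξ, s) ⟨(Ioc_subset_Icc_self.trans (uIcc_subset_Icc h0X hx)) hξ, hs⟩)
        (le_max_left _ _)
    have h2 := intervalIntegral.norm_integral_le_of_norm_le_const h1
    have h3 : |ut' x s| = ‖∫ ξ in (0:ℝ)..x, g1 (ξ, s)‖ := by
      simp only [hut'def, Real.norm_eq_abs, abs_neg]
    rw [h3]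
    refine le_trans h2 ?_
    have : |x - 0| ≤ B := by rw [sub_zero]; exact hxabs x hx
    exact mul_le_mul_of_nonneg_left this (le_max_right _ _)
  have huttb : ∀ x ∈ Icc (-ε) (L + ε), ∀ s ∈ Icc (-ε) (T + ε),
      |utt' x s| ≤ max M2 0 * B := by
    intro x hx s hs
    have h1 : ∀ ξ ∈ uIoc (0:ℝ) x, ‖g2 (ξ, s)‖ ≤ max M2 0 := fun ξ hξ =>
      le_trans (hM2 (ξ, s) ⟨(Ioc_subset_Icc_self.trans (uIcc_subset_Icc h0X hx)) hξ, hs⟩)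
        (le_max_left _ _)
    have h2 := intervalIntegral.norm_integral_le_of_norm_le_const h1
    have h3 : |utt' x s| = ‖∫ ξ in (0:ℝ)..x, g2 (ξ, s)‖ := by
      simp only [hutt'def, Real.norm_eq_abs, abs_neg]
    rw [h3]
    refine le_trans h2 ?_
    have : |x - 0| ≤ B := by rw [sub_zero]; exact hxabs x hx
    exact mul_le_mul_of_nonneg_left this (le_max_right _ _)
  have hsubΙL : uIoc (0:ℝ) L ⊆ Icc (-ε) (L + ε) :=
    Ioc_subset_Icc_self.trans (uIcc_subset_Icc h0X hLX)
  -- continuity of the slices of ut', utt' at time r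
  have hut'cont : ∀ r ∈ Icc (-ε) (T + ε),
      ContinuousOn (fun x => ut' x r) (Icc (-ε) (L + ε)) := fun r hr y hy =>
    (hDut r hr y hy).continuousAt.continuousWithinAt
  have hutt'cont : ∀ r ∈ Icc (-ε) (T + ε),
      ContinuousOn (fun x => utt' x r) (Icc (-ε) (L + ε)) := fun r hr y hy =>
    (hDutt r hr y hy).continuousAt.continuousWithinAt
  -- derivative of the squared-velocity integral
  have hRHS : HasDerivAt (fun s => ∫ x in (0:ℝ)..L, (utF w x s) ^ 2)
      (∫ x in (0:ℝ)..L, 2 * ut' x t * utt' x t) t := by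
    set ε₂ := min (t + ε) (T + ε - t) with hε₂def
    have hε₂0 : 0 < ε₂ := lt_min (by linarith [htT'.1]) (by linarith [htT'.2])
    have hball : ∀ r ∈ Metric.ball t ε₂, r ∈ Ioo (-ε) (T + ε) := by
      intro r hr
      rw [Metric.mem_ball, Real.dist_eq] at hr
      have h1 := abs_lt.1 hr
      have h2 := min_le_left (t + ε) (T + ε - t)
      have h3 := min_le_right (t + ε) (T + ε - t)
      constructor <;> [linarith; linarith]
    have key := intervalIntegral.hasDerivAt_integral_of_dominated_loc_of_deriv_le
      (F := fun s x => (utF w x s) ^ 2) (F' := fun s x => 2 * ut' x s * utt' x s) (x₀ := t)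
      (a := 0) (b := L) (bound := fun _ => 2 * (max M1 0 * B) * (max M2 0 * B)) (μ := volume)
      (Metric.ball_mem_nhds t hε₂0) ?_ ?_ ?_ ?_ ?_ ?_
    · exact key.2
    · filter_upwards [Ioo_mem_nhds htT'.1 htT'.2] with r hr
      have hc : ContinuousOn (fun x => (utF w x r) ^ 2) (Icc (-ε) (L + ε)) :=
        ((hut'cont r (Ioo_subset_Icc_self hr)).congr
          (fun y hy => hutF y hy r (Ioo_subset_Icc_self hr))).pow 2
      exact ((hc.mono hsubΙL).aestronglyMeasurable measurableSet_uIoc)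
    · have hc : ContinuousOn (fun x => (utF w x t) ^ 2) (Icc (-ε) (L + ε)) :=
        ((hut'cont t htT).congr (fun y hy => hutF y hy t htT)).pow 2
      exact (hc.mono (uIcc_subset_Icc h0X hLX)).intervalIntegrable
    · have hc : ContinuousOn (fun x => 2 * ut' x t * utt' x t) (Icc (-ε) (L + ε)) :=
        (continuousOn_const.mul (hut'cont t htT)).mul (hutt'cont t htT)
      exact ((hc.mono hsubΙL).aestronglyMeasurable measurableSet_uIoc)
    · refine Filter.Eventually.of_forall (fun x hx r hr => ?_)
      have hxm : x ∈ Icc (-ε) (L + ε) := hsubΙL hx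
      have hrm : r ∈ Icc (-ε) (T + ε) := Ioo_subset_Icc_self (hball r hr)
      have h1 := hutb x hxm r hrm
      have h2 := huttb x hxm r hrm
      have h3 : ‖2 * ut' x r * utt' x r‖ = 2 * |ut' x r| * |utt' x r| := by
        rw [Real.norm_eq_abs, abs_mul, abs_mul, abs_two]
      rw [h3]
      have hb1 : (0:ℝ) ≤ max M1 0 * B := mul_nonneg (le_max_right _ _) hB0.le
      have hb2 : (0:ℝ) ≤ max M2 0 * B := mul_nonneg (le_max_right _ _) hB0.le
      show 2 * |ut' x r| * |utt' x r| ≤ 2 * (max M1 0 * B) * (max M2 0 * B)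
      have h4 := mul_le_mul h1 h2 (abs_nonneg _) hb1
      nlinarith
    · exact intervalIntegrable_const
    · refine Filter.Eventually.of_forall (fun x hx r hr => ?_)
      have hxm : x ∈ Icc (-ε) (L + ε) := hsubΙL hx
      have hrI : r ∈ Ioo (-ε) (T + ε) := hball r hr
      have h1 : HasDerivAt (fun r => ut' x r) (utt' x r) r := hDt x hxm r hrI
      have h2 := h1.pow 2
      have h3 : (fun r' => (utF w x r') ^ 2) =ᶠ[nhds r] (fun r' => (ut' x r') ^ 2) := by
        filter_upwards [Ioo_mem_nhds hrI.1 hrI.2] with r' hr'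
        rw [hutF x hxm r' (Ioo_subset_Icc_self hr')]
      have h4 := h2.congr_of_eventuallyEq h3
      convert h4 using 1
      norm_num
  have hRHSval : deriv (fun s => ∫ x in (0:ℝ)..L, (utF w x s) ^ 2) t
      = ∫ x in (0:ℝ)..L, 2 * ut' x t * utt' x t := hRHS.deriv
  -- the tail integral G
  set G : ℝ → ℝ := fun y => ∫ ξ in y..L, utt' ξ t with hGdef
  have hGd : ∀ x ∈ Icc (0:ℝ) L, HasDerivAt G (-(utt' x t)) x := by
    intro x hx
    have hint : IntervalIntegrable (fun ξ => utt' ξ t) volume x L :=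
      ((hutt'cont t htT).mono (uIcc_subset_Icc (hsubX hx) hLX)).intervalIntegrable
    have hms : StronglyMeasurableAtFilter (fun ξ => utt' ξ t) (nhds x) volume :=
      ContinuousOn.stronglyMeasurableAtFilter (isOpen_Ioo (a := -ε) (b := L + ε))
        ((hutt'cont t htT).mono Ioo_subset_Icc_self) x ⟨by linarith [hx.1], by linarith [hx.2]⟩
    exact intervalIntegral.integral_hasDerivAt_left hint hms
      (hDutt t htT x (hsubX hx)).continuousAt
  have hGcont : ContinuousOn G (Icc (0:ℝ) L) := fun y hy =>
    (hGd y hy).continuousAt.continuousWithinAt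
  have hGL : G L = 0 := by simp only [hGdef]; exact intervalIntegral.integral_same
  have hWx0 : dX (W2 w) (0, t) = 0 := by
    rw [← hpdx 0 t (hmemU h0X htT)]
    exact (hbc t ht).2
  have hut'0 : ut' 0 t = 0 := by
    simp only [hut'def, intervalIntegral.integral_same, neg_zero]
  -- identify the integrand of the LHS
  have hint_eq : EqOn
      (fun x => pdx (fun y s => pdx w y s * ∫ ξ in y..L, uttF w ξ s) x t * pdt w x t)
      (fun x => (dX (dX (W2 w)) (x, t) * G x + dX (W2 w) (x, t) * -(utt' x t))
          * dT (W2 w) (x, t)) (uIcc 0 L) := by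
    intro x hx
    rw [uIcc_of_le hL.le] at hx
    have hxX : x ∈ Icc (-ε) (L + ε) := hsubX hx
    have hq : ((x, t) : ℝ × ℝ) ∈ U := hmemU hxX htT
    have h1 : HasDerivAt (fun y => dX (W2 w) (y, t)) (dX (dX (W2 w)) (x, t)) x :=
      sliceX (hWxd _ hq)
    have h2 := h1.mul (hGd x hx)
    have h3 : (fun y => pdx w y t * ∫ ξ in y..L, uttF w ξ t) =ᶠ[nhds x]
        (fun y => dX (W2 w) (y, t) * G y) := by
      filter_upwards [Ioo_mem_nhds (show -ε < x by linarith [hx.1])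
        (show x < L + ε by linarith [hx.2])] with y hy
      have hyX : y ∈ Icc (-ε) (L + ε) := Ioo_subset_Icc_self hy
      rw [hpdx _ _ (hmemU hyX htT)]
      congr 1
      simp only [hGdef]
      exact intervalIntegral.integral_congr
        (fun ξ hξ => huttF ξ (uIcc_subset_Icc hyX hLX hξ) t htT)
    have h4 := h2.congr_of_eventuallyEq h3
    show deriv (fun y => pdx w y t * ∫ ξ in y..L, uttF w ξ t) x * pdt w x t = _
    rw [h4.deriv, hpdt _ _ hq]
  have hLHS1 : (∫ x in (0:ℝ)..L,
        pdx (fun y s => pdx w y s * ∫ ξ in y..L, uttF w ξ s) x t * pdt w x t)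
      = ∫ x in (0:ℝ)..L, (dX (dX (W2 w)) (x, t) * G x + dX (W2 w) (x, t) * -(utt' x t))
          * dT (W2 w) (x, t) := intervalIntegral.integral_congr hint_eq
  have slicecont : ∀ {f : ℝ × ℝ → ℝ}, ContinuousOn f U →
      ContinuousOn (fun x => f (x, t)) (Icc (-ε) (L + ε)) := fun hf =>
    hf.comp (continuous_id.prodMk continuous_const).continuousOn (fun x hx => hmemU hx htT)
  -- first integration by parts
  have hu1 : ∀ x ∈ uIcc (0:ℝ) L,
      HasDerivAt (fun x => dT (W2 w) (x, t)) (dT (dX (W2 w)) (x, t)) x := by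
    intro x hx
    rw [uIcc_of_le hL.le] at hx
    have hq := hmemU (hsubX hx) htT
    have h := sliceX (hWtd _ hq)
    rwa [hmix _ hq] at h
  have hv1 : ∀ x ∈ uIcc (0:ℝ) L, HasDerivAt (fun x => dX (W2 w) (x, t) * G x)
      (dX (dX (W2 w)) (x, t) * G x + dX (W2 w) (x, t) * -(utt' x t)) x := by
    intro x hx
    rw [uIcc_of_le hL.le] at hx
    exact (sliceX (hWxd _ (hmemU (hsubX hx) htT))).mul (hGd x hx)
  have hu1' : IntervalIntegrable (fun x => dT (dX (W2 w)) (x, t)) volume 0 L :=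
    ((slicecont hWxt.continuousOn).mono (uIcc_subset_Icc h0X hLX)).intervalIntegrable
  have hv1' : IntervalIntegrable
      (fun x => dX (dX (W2 w)) (x, t) * G x + dX (W2 w) (x, t) * -(utt' x t)) volume 0 L := by
    refine ContinuousOn.intervalIntegrable ?_
    rw [uIcc_of_le hL.le]
    exact (((slicecont hWxx.continuousOn).mono hsubX).mul hGcont).add
      (((slicecont hWx.continuousOn).mono hsubX).mul ((hutt'cont t htT).mono hsubX).neg)
  have ibp1 := intervalIntegral.integral_mul_deriv_eq_deriv_mul hu1 hv1 hu1' hv1'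
  have hLHS2 : (∫ x in (0:ℝ)..L, (dX (dX (W2 w)) (x, t) * G x
        + dX (W2 w) (x, t) * -(utt' x t)) * dT (W2 w) (x, t))
      = - ∫ x in (0:ℝ)..L, dT (dX (W2 w)) (x, t) * (dX (W2 w) (x, t) * G x) := by
    have hcomm : EqOn
        (fun x => (dX (dX (W2 w)) (x, t) * G x + dX (W2 w) (x, t) * -(utt' x t))
          * dT (W2 w) (x, t))
        (fun x => dT (W2 w) (x, t) * (dX (dX (W2 w)) (x, t) * G x
          + dX (W2 w) (x, t) * -(utt' x t))) (uIcc 0 L) := fun x _ => mul_comm _ _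
    rw [intervalIntegral.integral_congr hcomm, ibp1, hGL, hWx0]
    ring
  -- second integration by parts
  have hu2 : ∀ x ∈ uIcc (0:ℝ) L, HasDerivAt G (-(utt' x t)) x := by
    intro x hx
    rw [uIcc_of_le hL.le] at hx
    exact hGd x hx
  have hv2 : ∀ x ∈ uIcc (0:ℝ) L, HasDerivAt (fun x => ut' x t) (-(g1 (x, t))) x := by
    intro x hx
    rw [uIcc_of_le hL.le] at hx
    exact hDut t htT x (hsubX hx)
  have hu2' : IntervalIntegrable (fun x => -(utt' x t)) volume 0 L := by
    refine ContinuousOn.intervalIntegrable ?_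
    rw [uIcc_of_le hL.le]
    exact ((hutt'cont t htT).mono hsubX).neg
  have hv2' : IntervalIntegrable (fun x => -(g1 (x, t))) volume 0 L := by
    refine ContinuousOn.intervalIntegrable ?_
    rw [uIcc_of_le hL.le]
    exact ((slicecont hg1c).mono hsubX).neg
  have ibp2 := intervalIntegral.integral_mul_deriv_eq_deriv_mul hu2 hv2 hu2' hv2'
  have hLHS3 : (- ∫ x in (0:ℝ)..L, dT (dX (W2 w)) (x, t) * (dX (W2 w) (x, t) * G x))
      = ∫ x in (0:ℝ)..L, ut' x t * utt' x t := by
    have e1 : (- ∫ x in (0:ℝ)..L, dT (dX (W2 w)) (x, t) * (dX (W2 w) (x, t) * G x))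
        = ∫ x in (0:ℝ)..L, G x * -(g1 (x, t)) := by
      rw [← intervalIntegral.integral_neg]
      refine intervalIntegral.integral_congr (fun x _ => ?_)
      simp only [hg1def]
      ring
    have e2 : (∫ x in (0:ℝ)..L, -(utt' x t) * ut' x t)
        = - ∫ x in (0:ℝ)..L, ut' x t * utt' x t := by
      rw [← intervalIntegral.integral_neg]
      exact intervalIntegral.integral_congr (fun x _ => by ring)
    rw [e1, ibp2, hGL, hut'0, e2]
    ring
  have hRHS2 : (∫ x in (0:ℝ)..L, 2 * ut' x t * utt' x t)
      = 2 * ∫ x in (0:ℝ)..L, ut' x t * utt' x t := by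
    rw [← intervalIntegral.integral_const_mul]
    exact intervalIntegral.integral_congr (fun x _ => by ring)
  rw [hLHS1, hLHS2, hLHS3, hRHSval, hRHS2]
  ring
end

section
/- Let w be a classical solution of the stiffness-only inextensible cantilever system with forcing p. Define the energy E₀(t) = (1/2)‖w_t(t)‖² + (D/2)‖w_xx(t)‖² + (D/2)‖(w_x w_xx)(t)‖². Then for all t ∈ [0,T]: E₀(t) = E₀(0) + ∫₀ᵗ ∫₀ᴸ p(x,τ) w_t(x,τ) dx dτ. -/
open MeasureTheory Set

lemma hasDerivAt_sliceX {F : ℝ × ℝ → ℝ} {q : ℝ × ℝ} (h : DifferentiableAt ℝ F q) :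
    HasDerivAt (fun y => F (y, q.2)) (fderiv ℝ F q (1, 0)) q.1 := by
  have h1 : HasDerivAt (fun y : ℝ => ((y, q.2) : ℝ × ℝ)) (((1:ℝ), (0:ℝ))) q.1 :=
    (hasDerivAt_id q.1).prodMk (hasDerivAt_const q.1 q.2)
  have h2 : HasFDerivAt F (fderiv ℝ F q) (q.1, q.2) := by
    rw [Prod.mk.eta]; exact h.hasFDerivAt
  exact h2.comp_hasDerivAt q.1 h1

lemma hasDerivAt_sliceT {F : ℝ × ℝ → ℝ} {q : ℝ × ℝ} (h : DifferentiableAt ℝ F q) :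
    HasDerivAt (fun s => F (q.1, s)) (fderiv ℝ F q (0, 1)) q.2 := by
  have h1 : HasDerivAt (fun s : ℝ => ((q.1, s) : ℝ × ℝ)) (((0:ℝ), (1:ℝ))) q.2 :=
    (hasDerivAt_const q.2 q.1).prodMk (hasDerivAt_id q.2)
  have h2 : HasFDerivAt F (fderiv ℝ F q) (q.1, q.2) := by
    rw [Prod.mk.eta]; exact h.hasFDerivAt
  exact h2.comp_hasDerivAt q.2 h1

lemma hasDerivAt_pdx {f : ℝ → ℝ → ℝ} {q : ℝ × ℝ}
    (h : DifferentiableAt ℝ (fun r : ℝ × ℝ => f r.1 r.2) q) :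
    HasDerivAt (fun y => f y q.2) (pdx f q.1 q.2) q.1 := by
  have h1 := hasDerivAt_sliceX h
  have : pdx f q.1 q.2 = fderiv ℝ (fun r : ℝ × ℝ => f r.1 r.2) q (1, 0) := by
    simpa [pdx] using h1.deriv
  rw [this]; exact h1

lemma hasDerivAt_pdt {f : ℝ → ℝ → ℝ} {q : ℝ × ℝ}
    (h : DifferentiableAt ℝ (fun r : ℝ × ℝ => f r.1 r.2) q) :
    HasDerivAt (fun s => f q.1 s) (pdt f q.1 q.2) q.2 := by
  have h1 := hasDerivAt_sliceT h
  have : pdt f q.1 q.2 = fderiv ℝ (fun r : ℝ × ℝ => f r.1 r.2) q (0, 1) := by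
    simpa [pdt] using h1.deriv
  rw [this]; exact h1

lemma contDiffOn_pdx {f : ℝ → ℝ → ℝ} {U : Set (ℝ × ℝ)} (hU : IsOpen U)
    (hf : ContDiffOn ℝ (⊤ : ℕ∞) (fun r : ℝ × ℝ => f r.1 r.2) U) :
    ContDiffOn ℝ (⊤ : ℕ∞) (fun r : ℝ × ℝ => pdx f r.1 r.2) U := by
  have h1 : ContDiffOn ℝ (⊤ : ℕ∞) (fun q => fderiv ℝ (fun r : ℝ × ℝ => f r.1 r.2) q) U :=
    hf.fderiv_of_isOpen hU le_rfl
  have h2 := h1.clm_apply (contDiffOn_const (c := ((1:ℝ),(0:ℝ))))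
  refine h2.congr fun q hq => ?_
  have hd : DifferentiableAt ℝ (fun r : ℝ × ℝ => f r.1 r.2) q :=
    (hf.contDiffAt (hU.mem_nhds hq)).differentiableAt (by simp)
  simpa [pdx] using (hasDerivAt_sliceX hd).deriv

lemma contDiffOn_pdt {f : ℝ → ℝ → ℝ} {U : Set (ℝ × ℝ)} (hU : IsOpen U)
    (hf : ContDiffOn ℝ (⊤ : ℕ∞) (fun r : ℝ × ℝ => f r.1 r.2) U) :
    ContDiffOn ℝ (⊤ : ℕ∞) (fun r : ℝ × ℝ => pdt f r.1 r.2) U := by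
  have h1 : ContDiffOn ℝ (⊤ : ℕ∞) (fun q => fderiv ℝ (fun r : ℝ × ℝ => f r.1 r.2) q) U :=
    hf.fderiv_of_isOpen hU le_rfl
  have h2 := h1.clm_apply (contDiffOn_const (c := ((0:ℝ),(1:ℝ))))
  refine h2.congr fun q hq => ?_
  have hd : DifferentiableAt ℝ (fun r : ℝ × ℝ => f r.1 r.2) q :=
    (hf.contDiffAt (hU.mem_nhds hq)).differentiableAt (by simp)
  simpa [pdt] using (hasDerivAt_sliceT hd).deriv
lemma pdt_pdx_symm {f : ℝ → ℝ → ℝ} {U : Set (ℝ × ℝ)} (hU : IsOpen U)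
    (hf : ContDiffOn ℝ (⊤ : ℕ∞) (fun r : ℝ × ℝ => f r.1 r.2) U) {q : ℝ × ℝ} (hq : q ∈ U) :
    pdt (pdx f) q.1 q.2 = pdx (pdt f) q.1 q.2 := by
  set F : ℝ × ℝ → ℝ := fun r => f r.1 r.2 with hF
  set f' : ℝ × ℝ → (ℝ × ℝ) →L[ℝ] ℝ := fun r => fderiv ℝ F r with hf'def
  have hdiffU : ∀ r ∈ U, DifferentiableAt ℝ F r := fun r hr =>
    (hf.contDiffAt (hU.mem_nhds hr)).differentiableAt (by simp)
  have hf' : ContDiffOn ℝ (⊤ : ℕ∞) f' U := hf.fderiv_of_isOpen hU le_rfl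
  have hf'q : DifferentiableAt ℝ f' q :=
    (hf'.contDiffAt (hU.mem_nhds hq)).differentiableAt (by simp)
  set f'' := fderiv ℝ f' q with hf''def
  have hsymm : ∀ v u : ℝ × ℝ, f'' v u = f'' u v := by
    intro v u
    refine second_derivative_symmetric_of_eventually (f := F) ?_ hf'q.hasFDerivAt v u
    filter_upwards [hU.mem_nhds hq] with r hr using (hdiffU r hr).hasFDerivAt
  have hGx : ∀ v : ℝ × ℝ, HasFDerivAt (fun r => f' r v)
      ((ContinuousLinearMap.apply ℝ ℝ v).comp f'') q :=
    fun v => (ContinuousLinearMap.apply ℝ ℝ v).hasFDerivAt.comp q hf'q.hasFDerivAt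
  have hdGv : ∀ v : ℝ × ℝ, DifferentiableAt ℝ (fun r => f' r v) q :=
    fun v => (hGx v).differentiableAt
  have hfderivGv : ∀ v u : ℝ × ℝ, fderiv ℝ (fun r => f' r v) q u = f'' u v := by
    intro v u; rw [(hGx v).fderiv]; rfl
  have hqmem : ((q.1, q.2) : ℝ × ℝ) ∈ U := by simpa using hq
  have h1 : pdt (pdx f) q.1 q.2 = f'' (0, 1) (1, 0) := by
    have hc : Continuous (fun s : ℝ => ((q.1, s) : ℝ × ℝ)) := by fun_prop
    have hev : (fun s => pdx f q.1 s) =ᶠ[nhds q.2] (fun s => f' (q.1, s) (1, 0)) := by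
      filter_upwards [(hU.preimage hc).mem_nhds (show q.2 ∈ _ from hqmem)] with s hs
      exact (hasDerivAt_sliceX (q := (q.1, s)) (hdiffU _ hs)).deriv
    calc pdt (pdx f) q.1 q.2 = deriv (fun s => f' (q.1, s) (1, 0)) q.2 := hev.deriv_eq
      _ = fderiv ℝ (fun r => f' r (1, 0)) q (0, 1) := (hasDerivAt_sliceT (hdGv (1, 0))).deriv
      _ = f'' (0, 1) (1, 0) := hfderivGv _ _
  have h2 : pdx (pdt f) q.1 q.2 = f'' (1, 0) (0, 1) := by
    have hc : Continuous (fun y : ℝ => ((y, q.2) : ℝ × ℝ)) := by fun_prop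
    have hev : (fun y => pdt f y q.2) =ᶠ[nhds q.1] (fun y => f' (y, q.2) (0, 1)) := by
      filter_upwards [(hU.preimage hc).mem_nhds (show q.1 ∈ _ from hqmem)] with y hy
      exact (hasDerivAt_sliceT (q := (y, q.2)) (hdiffU _ hy)).deriv
    calc pdx (pdt f) q.1 q.2 = deriv (fun y => f' (y, q.2) (0, 1)) q.1 := hev.deriv_eq
      _ = fderiv ℝ (fun r => f' r (0, 1)) q (1, 0) := (hasDerivAt_sliceX (hdGv (0, 1))).deriv
      _ = f'' (1, 0) (0, 1) := hfderivGv _ _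
  rw [h1, h2, hsymm]
lemma deriv_zero_of_zero_on_Icc {g : ℝ → ℝ} {d T τ : ℝ} (hT : 0 < T) (hτ : τ ∈ Icc 0 T)
    (hd : HasDerivAt g d τ) (hg : ∀ s ∈ Icc (0:ℝ) T, g s = 0) : d = 0 := by
  have h1 : HasDerivWithinAt g d (Icc 0 T) τ := hd.hasDerivWithinAt
  have h2 : HasDerivWithinAt g 0 (Icc 0 T) τ :=
    (hasDerivWithinAt_const τ _ (0:ℝ)).congr (fun y hy => hg y hy) (hg τ hτ)
  have hu := uniqueDiffOn_Icc hT τ hτ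
  rw [← h1.derivWithin hu, h2.derivWithin hu]

lemma swap_lemma {f : ℝ → ℝ → ℝ} {L t : ℝ} (hL : 0 ≤ L) (ht : 0 ≤ t)
    (hc : ContinuousOn (fun r : ℝ × ℝ => f r.1 r.2) (Icc 0 L ×ˢ Icc 0 t)) :
    ∫ x in (0:ℝ)..L, ∫ τ in (0:ℝ)..t, f x τ = ∫ τ in (0:ℝ)..t, ∫ x in (0:ℝ)..L, f x τ := by
  simp only [intervalIntegral.integral_of_le hL, intervalIntegral.integral_of_le ht]
  have hint : IntegrableOn (fun r : ℝ × ℝ => f r.1 r.2) (Ioc 0 L ×ˢ Ioc 0 t) volume := by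
    refine (hc.integrableOn_compact (isCompact_Icc.prod isCompact_Icc)).mono_set ?_
    exact Set.prod_mono Ioc_subset_Icc_self Ioc_subset_Icc_self
  have h := MeasureTheory.integral_integral_swap (μ := volume.restrict (Ioc 0 L))
    (ν := volume.restrict (Ioc 0 t)) (f := f) ?_
  · exact h
  · rw [Measure.prod_restrict]
    rw [← Measure.volume_eq_prod]
    exact hint
/-- Energy density. -/
noncomputable def eDen (D : ℝ) (w : ℝ → ℝ → ℝ) : ℝ → ℝ → ℝ := fun x t =>
  (1/2) * (pdt w x t) ^ 2 + (D/2) * (pdx (pdx w) x t) ^ 2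
    + (D/2) * (pdx w x t * pdx (pdx w) x t) ^ 2

/-- Time derivative of the energy density. -/
noncomputable def eDot (D : ℝ) (w : ℝ → ℝ → ℝ) : ℝ → ℝ → ℝ := fun x t =>
  pdt w x t * pdt (pdt w) x t + D * (pdx (pdx w) x t * pdx (pdx (pdt w)) x t)
    + D * ((pdx w x t * pdx (pdx w) x t) *
        (pdx (pdt w) x t * pdx (pdx w) x t + pdx w x t * pdx (pdx (pdt w)) x t))

/-- Boundary flux. -/
noncomputable def flux (D : ℝ) (w : ℝ → ℝ → ℝ) : ℝ → ℝ → ℝ := fun x t =>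
  D * (-(pdt w x t * pdx (pdx (pdx w)) x t) + pdx (pdt w) x t * pdx (pdx w) x t
    - pdt w x t * pdx w x t * (pdx (pdx w) x t) ^ 2
    - pdt w x t * (pdx w x t) ^ 2 * pdx (pdx (pdx w)) x t
    + pdx (pdt w) x t * (pdx w x t) ^ 2 * pdx (pdx w) x t)

/-- Spatial derivative of the boundary flux. -/
noncomputable def fluxDx (D : ℝ) (w : ℝ → ℝ → ℝ) : ℝ → ℝ → ℝ := fun x t =>
  D * (-(pdt w x t * pdx (pdx (pdx (pdx w))) x t)
    + pdx (pdx (pdt w)) x t * pdx (pdx w) x t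
    + pdx (pdt w) x t * pdx w x t * (pdx (pdx w) x t) ^ 2
    - pdt w x t * (pdx (pdx w) x t) ^ 3
    - 4 * pdt w x t * pdx w x t * pdx (pdx w) x t * pdx (pdx (pdx w)) x t
    - pdt w x t * (pdx w x t) ^ 2 * pdx (pdx (pdx (pdx w))) x t
    + pdx (pdx (pdt w)) x t * (pdx w x t) ^ 2 * pdx (pdx w) x t)

/-- The stiffness-only inextensible cantilever operator
`w_tt + D ∂ₓ⁴w - D ∂ₓ(w_xx² w_x) + D ∂ₓ²(w_x² w_xx)`. -/
noncomputable def stiffOp (D : ℝ) (w : ℝ → ℝ → ℝ) : ℝ → ℝ → ℝ := fun x t =>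
  pdt (pdt w) x t + D * pdx (pdx (pdx (pdx w))) x t
    - D * pdx (fun y s => (pdx (pdx w) y s) ^ 2 * pdx w y s) x t
    + D * pdx (pdx (fun y s => (pdx w y s) ^ 2 * pdx (pdx w) y s)) x t

/-- A classical solution of the stiffness-only inextensible cantilever system on
`[0,L] × [0,T]` with forcing `p`: smooth on an open neighborhood of `[0,L] × [0,T]`,
satisfying the PDE pointwise and the clamped-free boundary conditions. -/
def IsStiffSol (L D T : ℝ) (p w : ℝ → ℝ → ℝ) : Prop :=
  (∃ U : Set (ℝ × ℝ), IsOpen U ∧ Icc (0:ℝ) L ×ˢ Icc (0:ℝ) T ⊆ U ∧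
      ContDiffOn ℝ (⊤ : ℕ∞) (fun q : ℝ × ℝ => w q.1 q.2) U) ∧
  (∀ x ∈ Icc (0:ℝ) L, ∀ t ∈ Icc (0:ℝ) T, stiffOp D w x t = p x t) ∧
  (∀ t ∈ Icc (0:ℝ) T,
    w 0 t = 0 ∧ pdx w 0 t = 0 ∧ pdx (pdx w) L t = 0 ∧ pdx (pdx (pdx w)) L t = 0)

/-- Energy identity for classical solutions of the stiffness-only system:
`E₀(t) = E₀(0) + ∫₀ᵗ ∫₀ᴸ p w_t dx dτ`. -/
theorem stiffness_energy_identity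
    (L D T : ℝ) (hL : 0 < L) (hD : 0 < D) (hT : 0 < T)
    (p w : ℝ → ℝ → ℝ) (hp : ContDiff ℝ (⊤ : ℕ∞) (fun q : ℝ × ℝ => p q.1 q.2))
    (hw : IsStiffSol L D T p w) :
    ∀ t ∈ Icc (0:ℝ) T,
      (1/2) * (∫ x in (0:ℝ)..L, (pdt w x t) ^ 2)
        + (D/2) * (∫ x in (0:ℝ)..L, (pdx (pdx w) x t) ^ 2)
        + (D/2) * (∫ x in (0:ℝ)..L, (pdx w x t * pdx (pdx w) x t) ^ 2)
      = (1/2) * (∫ x in (0:ℝ)..L, (pdt w x 0) ^ 2)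
        + (D/2) * (∫ x in (0:ℝ)..L, (pdx (pdx w) x 0) ^ 2)
        + (D/2) * (∫ x in (0:ℝ)..L, (pdx w x 0 * pdx (pdx w) x 0) ^ 2)
        + ∫ τ in (0:ℝ)..t, ∫ x in (0:ℝ)..L, p x τ * pdt w x τ := by
  intro t ht
  obtain ⟨⟨U, hUo, hUsub, hW⟩, hPDE, hBC⟩ := hw
  have hmem : ∀ {x τ : ℝ}, x ∈ Icc (0:ℝ) L → τ ∈ Icc (0:ℝ) T → ((x, τ) : ℝ × ℝ) ∈ U :=
    fun {x τ} hx hτ => hUsub (mk_mem_prod hx hτ)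
  have ht0 : (0:ℝ) ≤ t := ht.1
  have h0T : (0:ℝ) ∈ Icc (0:ℝ) T := left_mem_Icc.mpr hT.le
  have htT : Icc (0:ℝ) t ⊆ Icc (0:ℝ) T := Icc_subset_Icc le_rfl ht.2
  -- smoothness of all derived functions
  have S0 : ContDiffOn ℝ (⊤ : ℕ∞) (fun r : ℝ × ℝ => w r.1 r.2) U := hW
  have S1 := contDiffOn_pdx hUo S0
  have S2 := contDiffOn_pdx hUo S1
  have S3 := contDiffOn_pdx hUo S2
  have S4 := contDiffOn_pdx hUo S3
  have T0 := contDiffOn_pdt hUo S0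
  have T1 := contDiffOn_pdx hUo T0
  have T2 := contDiffOn_pdx hUo T1
  have A0 := contDiffOn_pdt hUo T0
  have hdiff : ∀ {g : ℝ → ℝ → ℝ}, ContDiffOn ℝ (⊤ : ℕ∞) (fun r : ℝ × ℝ => g r.1 r.2) U →
      ∀ {q : ℝ × ℝ}, q ∈ U → DifferentiableAt ℝ (fun r : ℝ × ℝ => g r.1 r.2) q :=
    fun {g} hg {q} hq => (hg.contDiffAt (hUo.mem_nhds hq)).differentiableAt (by simp)
  -- Clairaut
  have hc1 : ∀ {x τ : ℝ}, ((x, τ) : ℝ × ℝ) ∈ U → pdt (pdx w) x τ = pdx (pdt w) x τ :=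
    fun {x τ} hq => pdt_pdx_symm hUo S0 hq
  have hc2 : ∀ {x τ : ℝ}, ((x, τ) : ℝ × ℝ) ∈ U →
      pdt (pdx (pdx w)) x τ = pdx (pdx (pdt w)) x τ := by
    intro x τ hq
    rw [pdt_pdx_symm hUo S1 hq]
    have hcm : Continuous (fun y : ℝ => ((y, τ) : ℝ × ℝ)) := by fun_prop
    have hev : (fun y => pdt (pdx w) y τ) =ᶠ[nhds x] (fun y => pdx (pdt w) y τ) := by
      filter_upwards [(hUo.preimage hcm).mem_nhds (show x ∈ _ from hq)] with y hy
      exact hc1 hy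
    exact hev.deriv_eq
  -- boundary values of time derivatives at x = 0
  have hv0_0 : ∀ τ ∈ Icc (0:ℝ) T, pdt w 0 τ = 0 := by
    intro τ hτ
    have hq : (((0:ℝ), τ) : ℝ × ℝ) ∈ U := hmem (left_mem_Icc.mpr hL.le) hτ
    exact deriv_zero_of_zero_on_Icc hT hτ (hasDerivAt_pdt (hdiff S0 hq))
      (fun s hs => (hBC s hs).1)
  have hv1_0 : ∀ τ ∈ Icc (0:ℝ) T, pdx (pdt w) 0 τ = 0 := by
    intro τ hτ
    have hq : (((0:ℝ), τ) : ℝ × ℝ) ∈ U := hmem (left_mem_Icc.mpr hL.le) hτ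
    rw [← hc1 hq]
    exact deriv_zero_of_zero_on_Icc hT hτ (hasDerivAt_pdt (hdiff S1 hq))
      (fun s hs => (hBC s hs).2.1)
  -- PDE in polynomial form
  have hpoly : ∀ {x τ : ℝ}, x ∈ Icc (0:ℝ) L → τ ∈ Icc (0:ℝ) T →
      pdt (pdt w) x τ + D * pdx (pdx (pdx (pdx w))) x τ
        - D * (2 * pdx w x τ * pdx (pdx w) x τ * pdx (pdx (pdx w)) x τ + (pdx (pdx w) x τ) ^ 3)
        + D * (2 * (pdx (pdx w) x τ) ^ 3
            + 6 * pdx w x τ * pdx (pdx w) x τ * pdx (pdx (pdx w)) x τ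
            + (pdx w x τ) ^ 2 * pdx (pdx (pdx (pdx w))) x τ) = p x τ := by
    intro x τ hx hτ
    have hq : ((x, τ) : ℝ × ℝ) ∈ U := hmem hx hτ
    have hE1 : pdx (fun y s => (pdx (pdx w) y s) ^ 2 * pdx w y s) x τ
        = 2 * pdx w x τ * pdx (pdx w) x τ * pdx (pdx (pdx w)) x τ + (pdx (pdx w) x τ) ^ 3 := by
      have hb2 : HasDerivAt (fun y => pdx (pdx w) y τ) (pdx (pdx (pdx w)) x τ) x :=
        hasDerivAt_pdx (hdiff S2 hq)
      have hb1 : HasDerivAt (fun y => pdx w y τ) (pdx (pdx w) x τ) x :=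
        hasDerivAt_pdx (hdiff S1 hq)
      have h := (hb2.pow 2).mul hb1
      have h' : HasDerivAt (fun y => (pdx (pdx w) y τ) ^ 2 * pdx w y τ)
          (2 * pdx w x τ * pdx (pdx w) x τ * pdx (pdx (pdx w)) x τ + (pdx (pdx w) x τ) ^ 3) x := by
        refine h.congr_deriv ?_
        simp only [Pi.pow_apply, Pi.mul_apply]
        push_cast; ring
      exact h'.deriv
    have hE2 : pdx (pdx (fun y s => (pdx w y s) ^ 2 * pdx (pdx w) y s)) x τ
        = 2 * (pdx (pdx w) x τ) ^ 3
            + 6 * pdx w x τ * pdx (pdx w) x τ * pdx (pdx (pdx w)) x τ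
            + (pdx w x τ) ^ 2 * pdx (pdx (pdx (pdx w))) x τ := by
      have hcm : Continuous (fun y : ℝ => ((y, τ) : ℝ × ℝ)) := by fun_prop
      have hev : (fun y => pdx (fun z s => (pdx w z s) ^ 2 * pdx (pdx w) z s) y τ) =ᶠ[nhds x]
          (fun y => 2 * pdx w y τ * (pdx (pdx w) y τ) ^ 2
            + (pdx w y τ) ^ 2 * pdx (pdx (pdx w)) y τ) := by
        filter_upwards [(hUo.preimage hcm).mem_nhds (show x ∈ _ from hq)] with y hy
        have hb1 : HasDerivAt (fun z => pdx w z τ) (pdx (pdx w) y τ) y :=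
          hasDerivAt_pdx (hdiff S1 hy)
        have hb2 : HasDerivAt (fun z => pdx (pdx w) z τ) (pdx (pdx (pdx w)) y τ) y :=
          hasDerivAt_pdx (hdiff S2 hy)
        have h := (hb1.pow 2).mul hb2
        have h' : HasDerivAt (fun z => (pdx w z τ) ^ 2 * pdx (pdx w) z τ)
            (2 * pdx w y τ * (pdx (pdx w) y τ) ^ 2
              + (pdx w y τ) ^ 2 * pdx (pdx (pdx w)) y τ) y := by
          refine h.congr_deriv ?_
          simp only [Pi.pow_apply, Pi.mul_apply]
          push_cast; ring
        exact h'.deriv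
      have hb1 : HasDerivAt (fun y => pdx w y τ) (pdx (pdx w) x τ) x :=
        hasDerivAt_pdx (hdiff S1 hq)
      have hb2 : HasDerivAt (fun y => pdx (pdx w) y τ) (pdx (pdx (pdx w)) x τ) x :=
        hasDerivAt_pdx (hdiff S2 hq)
      have hb3 : HasDerivAt (fun y => pdx (pdx (pdx w)) y τ) (pdx (pdx (pdx (pdx w))) x τ) x :=
        hasDerivAt_pdx (hdiff S3 hq)
      have h := ((hb1.const_mul 2).mul (hb2.pow 2)).add ((hb1.pow 2).mul hb3)
      have h' : HasDerivAt (fun y => 2 * pdx w y τ * (pdx (pdx w) y τ) ^ 2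
            + (pdx w y τ) ^ 2 * pdx (pdx (pdx w)) y τ)
          (2 * (pdx (pdx w) x τ) ^ 3
            + 6 * pdx w x τ * pdx (pdx w) x τ * pdx (pdx (pdx w)) x τ
            + (pdx w x τ) ^ 2 * pdx (pdx (pdx (pdx w))) x τ) x := by
        refine h.congr_deriv ?_
        simp only [Pi.pow_apply, Pi.mul_apply]
        push_cast; ring
      calc pdx (pdx (fun y s => (pdx w y s) ^ 2 * pdx (pdx w) y s)) x τ
          = deriv (fun y => 2 * pdx w y τ * (pdx (pdx w) y τ) ^ 2
              + (pdx w y τ) ^ 2 * pdx (pdx (pdx w)) y τ) x := hev.deriv_eq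
        _ = _ := h'.deriv
    have hpde := hPDE x hx τ hτ
    simp only [stiffOp] at hpde
    rw [hE1, hE2] at hpde
    exact hpde
  -- divergence identity
  have hdiv : ∀ {x τ : ℝ}, x ∈ Icc (0:ℝ) L → τ ∈ Icc (0:ℝ) T →
      eDot D w x τ = p x τ * pdt w x τ + fluxDx D w x τ := by
    intro x τ hx hτ
    have h := hpoly hx hτ
    simp only [eDot, fluxDx]
    linear_combination (pdt w x τ) * h
  -- boundary values of the flux
  have hfluxL : ∀ τ ∈ Icc (0:ℝ) T, flux D w L τ = 0 := by
    intro τ hτ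
    obtain ⟨-, -, h2, h3⟩ := hBC τ hτ
    simp only [flux]
    rw [h2, h3]; ring
  have hflux0 : ∀ τ ∈ Icc (0:ℝ) T, flux D w 0 τ = 0 := by
    intro τ hτ
    simp only [flux]
    rw [hv0_0 τ hτ, hv1_0 τ hτ]; ring
  -- continuity
  have C1 := S1.continuousOn
  have C2 := S2.continuousOn
  have C3 := S3.continuousOn
  have C4 := S4.continuousOn
  have CT0 := T0.continuousOn
  have CT1 := T1.continuousOn
  have CT2 := T2.continuousOn
  have CA0 := A0.continuousOn
  have CeDen : ContinuousOn (fun r : ℝ × ℝ => eDen D w r.1 r.2) U := by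
    simp only [eDen]
    exact ((continuousOn_const.mul (CT0.pow 2)).add (continuousOn_const.mul (C2.pow 2))).add
      (continuousOn_const.mul ((C1.mul C2).pow 2))
  have CeDot : ContinuousOn (fun r : ℝ × ℝ => eDot D w r.1 r.2) U := by
    simp only [eDot]
    exact ((CT0.mul CA0).add (continuousOn_const.mul (C2.mul CT2))).add
      (continuousOn_const.mul ((C1.mul C2).mul ((CT1.mul C2).add (C1.mul CT2))))
  have CfluxDx : ContinuousOn (fun r : ℝ × ℝ => fluxDx D w r.1 r.2) U := by
    simp only [fluxDx]
    exact continuousOn_const.mul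
      (((((((CT0.mul C4).neg.add (CT2.mul C2)).add ((CT1.mul C1).mul (C2.pow 2))).sub
        (CT0.mul (C2.pow 3))).sub ((((continuousOn_const.mul CT0).mul C1).mul C2).mul C3)).sub
        ((CT0.mul (C1.pow 2)).mul C4)).add ((CT2.mul (C1.pow 2)).mul C2))
  have hcontSliceX : ∀ {F : ℝ × ℝ → ℝ}, ContinuousOn F U → ∀ {τ : ℝ}, τ ∈ Icc (0:ℝ) T →
      ContinuousOn (fun x => F (x, τ)) (Icc (0:ℝ) L) := fun {F} hF {τ} hτ =>
    hF.comp ((continuous_id.prodMk continuous_const).continuousOn) (fun x hx => hmem hx hτ)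
  have hcontSliceT : ∀ {F : ℝ × ℝ → ℝ}, ContinuousOn F U → ∀ {x : ℝ}, x ∈ Icc (0:ℝ) L →
      ContinuousOn (fun τ => F (x, τ)) (Icc (0:ℝ) T) := fun {F} hF {x} hx =>
    hF.comp ((continuous_const.prodMk continuous_id).continuousOn) (fun τ hτ => hmem hx hτ)
  have hInt : ∀ {F : ℝ × ℝ → ℝ}, ContinuousOn F U → ∀ {τ : ℝ}, τ ∈ Icc (0:ℝ) T →
      IntervalIntegrable (fun x => F (x, τ)) volume 0 L :=
    fun {F} hF {τ} hτ => (hcontSliceX hF hτ).intervalIntegrable_of_Icc hL.le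
  -- splitting the energy integral
  have hsplit : ∀ s ∈ Icc (0:ℝ) T,
      ∫ x in (0:ℝ)..L, eDen D w x s
        = (1/2) * (∫ x in (0:ℝ)..L, (pdt w x s) ^ 2)
          + (D/2) * (∫ x in (0:ℝ)..L, (pdx (pdx w) x s) ^ 2)
          + (D/2) * (∫ x in (0:ℝ)..L, (pdx w x s * pdx (pdx w) x s) ^ 2) := by
    intro s hs
    have i1 : IntervalIntegrable (fun x => (1/2 : ℝ) * (pdt w x s) ^ 2) volume 0 L :=
      hInt (continuousOn_const.mul (CT0.pow 2)) hs
    have i2 : IntervalIntegrable (fun x => (D/2) * (pdx (pdx w) x s) ^ 2) volume 0 L :=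
      hInt (continuousOn_const.mul (C2.pow 2)) hs
    have i3 : IntervalIntegrable (fun x => (D/2) * (pdx w x s * pdx (pdx w) x s) ^ 2) volume 0 L :=
      hInt (continuousOn_const.mul ((C1.mul C2).pow 2)) hs
    simp only [eDen]
    rw [intervalIntegral.integral_add (i1.add i2) i3, intervalIntegral.integral_add i1 i2,
      intervalIntegral.integral_const_mul, intervalIntegral.integral_const_mul,
      intervalIntegral.integral_const_mul]
  -- FTC in x for the flux
  have hFTCx : ∀ τ ∈ Icc (0:ℝ) T, ∫ x in (0:ℝ)..L, fluxDx D w x τ = 0 := by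
    intro τ hτ
    have hder : ∀ x ∈ uIcc (0:ℝ) L,
        HasDerivAt (fun y => flux D w y τ) (fluxDx D w x τ) x := by
      intro x hx
      rw [uIcc_of_le hL.le] at hx
      have hq : ((x, τ) : ℝ × ℝ) ∈ U := hmem hx hτ
      have hv0 : HasDerivAt (fun y => pdt w y τ) (pdx (pdt w) x τ) x :=
        hasDerivAt_pdx (hdiff T0 hq)
      have hv1 : HasDerivAt (fun y => pdx (pdt w) y τ) (pdx (pdx (pdt w)) x τ) x :=
        hasDerivAt_pdx (hdiff T1 hq)
      have hw1 : HasDerivAt (fun y => pdx w y τ) (pdx (pdx w) x τ) x :=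
        hasDerivAt_pdx (hdiff S1 hq)
      have hw2 : HasDerivAt (fun y => pdx (pdx w) y τ) (pdx (pdx (pdx w)) x τ) x :=
        hasDerivAt_pdx (hdiff S2 hq)
      have hw3 : HasDerivAt (fun y => pdx (pdx (pdx w)) y τ) (pdx (pdx (pdx (pdx w))) x τ) x :=
        hasDerivAt_pdx (hdiff S3 hq)
      have h := (((((hv0.mul hw3).neg.add (hv1.mul hw2)).sub
        ((hv0.mul hw1).mul (hw2.pow 2))).sub ((hv0.mul (hw1.pow 2)).mul hw3)).add
        ((hv1.mul (hw1.pow 2)).mul hw2)).const_mul D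
      have h' : HasDerivAt (fun y => flux D w y τ) (fluxDx D w x τ) x := by
        simp only [flux, fluxDx]
        refine h.congr_deriv ?_
        simp only [Pi.pow_apply, Pi.mul_apply]
        push_cast; ring
      exact h'
    have hint : IntervalIntegrable (fun x => fluxDx D w x τ) volume 0 L := hInt CfluxDx hτ
    rw [intervalIntegral.integral_eq_sub_of_hasDerivAt hder hint, hfluxL τ hτ, hflux0 τ hτ,
      sub_zero]
  -- FTC in t for the energy density
  have hFTCt : ∀ x ∈ Icc (0:ℝ) L,
      ∫ τ in (0:ℝ)..t, eDot D w x τ = eDen D w x t - eDen D w x 0 := by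
    intro x hx
    refine intervalIntegral.integral_eq_sub_of_hasDerivAt ?_ ?_
    · intro τ hτ
      rw [uIcc_of_le ht0] at hτ
      have hq : ((x, τ) : ℝ × ℝ) ∈ U := hmem hx (htT hτ)
      have hv0t : HasDerivAt (fun s => pdt w x s) (pdt (pdt w) x τ) τ :=
        hasDerivAt_pdt (hdiff T0 hq)
      have hw1t : HasDerivAt (fun s => pdx w x s) (pdx (pdt w) x τ) τ := by
        have h := hasDerivAt_pdt (hdiff S1 hq)
        rwa [hc1 hq] at h
      have hw2t : HasDerivAt (fun s => pdx (pdx w) x s) (pdx (pdx (pdt w)) x τ) τ := by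
        have h := hasDerivAt_pdt (hdiff S2 hq)
        rwa [hc2 hq] at h
      have h := (((hv0t.pow 2).const_mul (1/2 : ℝ)).add
        ((hw2t.pow 2).const_mul (D/2))).add (((hw1t.mul hw2t).pow 2).const_mul (D/2))
      have h' : HasDerivAt (fun s => eDen D w x s) (eDot D w x τ) τ := by
        simp only [eDen, eDot]
        refine h.congr_deriv ?_
        simp only [Pi.pow_apply, Pi.mul_apply]
        push_cast; ring
      exact h'
    · exact ((hcontSliceT CeDot hx).mono htT).intervalIntegrable_of_Icc ht0
  -- inner spatial integral identity
  have hIntPV : ∀ {τ : ℝ}, τ ∈ Icc (0:ℝ) T →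
      IntervalIntegrable (fun x => p x τ * pdt w x τ) volume 0 L :=
    fun {τ} hτ => hInt ((hp.continuous.continuousOn).mul CT0) hτ
  have hinner : ∀ τ ∈ Icc (0:ℝ) T,
      ∫ x in (0:ℝ)..L, eDot D w x τ = ∫ x in (0:ℝ)..L, p x τ * pdt w x τ := by
    intro τ hτ
    have h1 : ∫ x in (0:ℝ)..L, eDot D w x τ
        = ∫ x in (0:ℝ)..L, (p x τ * pdt w x τ + fluxDx D w x τ) := by
      refine intervalIntegral.integral_congr fun x hx => ?_
      rw [uIcc_of_le hL.le] at hx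
      exact hdiv hx hτ
    rw [h1, intervalIntegral.integral_add (hIntPV hτ) (hInt CfluxDx hτ), hFTCx τ hτ, add_zero]
  -- assemble
  have key : (∫ x in (0:ℝ)..L, eDen D w x t) - (∫ x in (0:ℝ)..L, eDen D w x 0)
      = ∫ τ in (0:ℝ)..t, ∫ x in (0:ℝ)..L, p x τ * pdt w x τ := by
    have hIt : IntervalIntegrable (fun x => eDen D w x t) volume 0 L := hInt CeDen ht
    have hI0 : IntervalIntegrable (fun x => eDen D w x 0) volume 0 L := hInt CeDen h0T
    have hmono : ContinuousOn (fun r : ℝ × ℝ => eDot D w r.1 r.2) (Icc 0 L ×ˢ Icc 0 t) := by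
      refine CeDot.mono fun r hr => ?_
      have := hmem hr.1 (htT hr.2)
      simpa using this
    calc (∫ x in (0:ℝ)..L, eDen D w x t) - (∫ x in (0:ℝ)..L, eDen D w x 0)
        = ∫ x in (0:ℝ)..L, (eDen D w x t - eDen D w x 0) :=
          (intervalIntegral.integral_sub hIt hI0).symm
      _ = ∫ x in (0:ℝ)..L, ∫ τ in (0:ℝ)..t, eDot D w x τ := by
          refine intervalIntegral.integral_congr fun x hx => ?_
          rw [uIcc_of_le hL.le] at hx
          exact (hFTCt x hx).symm
      _ = ∫ τ in (0:ℝ)..t, ∫ x in (0:ℝ)..L, eDot D w x τ := swap_lemma hL.le ht0 hmono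
      _ = ∫ τ in (0:ℝ)..t, ∫ x in (0:ℝ)..L, p x τ * pdt w x τ := by
          refine intervalIntegral.integral_congr fun τ hτ => ?_
          rw [uIcc_of_le ht0] at hτ
          exact hinner τ (htT hτ)
  rw [← hsplit t ht, ← hsplit 0 h0T]
  linarith [key]
end
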